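/- arXiv:2212.04187 — 5 statements merged into one kernel-verified Lean document; each statement's English description precedes it below -/
import Mathlib

section
/- Let x* ∈ ℝⁿ with support J = supp(x*). Suppose there exists a vector c ∈ ℝⁿ such that ⟨P e_i, c⟩ = ‖P e_i‖₂ · sgn(x*_i) for every i ∈ J and |⟨P e_i, c⟩| < ‖P e_i‖₂ for every i ∉ J. Then x* is a minimizer of the weighted ℓ1 norm ‖W x‖₁ = Σ_{i=1}^n w_i |x_i| over all x ∈ ℝⁿ satisfying A x = A x*. -/
open scoped RealInnerProductSpace Classical

/-- The `i`-th standard basis vector of `ℝⁿ`. -/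
noncomputable def stdBasis (n : ℕ) (i : Fin n) : EuclideanSpace ℝ (Fin n) :=
  EuclideanSpace.single i 1

/-- `P`: the orthogonal projection of `ℝⁿ` onto the orthogonal complement of `ker A`
(this equals `A†A` for the Moore–Penrose pseudoinverse `A†`). -/
noncomputable def proj {m n : ℕ} (A : EuclideanSpace ℝ (Fin n) →ₗ[ℝ] EuclideanSpace ℝ (Fin m))
    (x : EuclideanSpace ℝ (Fin n)) : EuclideanSpace ℝ (Fin n) :=
  (Submodule.orthogonalProjection (LinearMap.ker A)ᗮ x : EuclideanSpace ℝ (Fin n))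

/-- The weights `w i = ‖P e_i‖₂`. -/
noncomputable def wgt {m n : ℕ} (A : EuclideanSpace ℝ (Fin n) →ₗ[ℝ] EuclideanSpace ℝ (Fin m))
    (i : Fin n) : ℝ :=
  ‖proj A (stdBasis n i)‖

/-- The weighted ℓ¹ norm `‖W x‖₁ = ∑ i, w i * |x i|`. -/
noncomputable def wl1 {m n : ℕ} (A : EuclideanSpace ℝ (Fin n) →ₗ[ℝ] EuclideanSpace ℝ (Fin m))
    (x : EuclideanSpace ℝ (Fin n)) : ℝ :=
  ∑ i, wgt A i * |x i|

theorem stmt0 {m n : ℕ}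
    (A : EuclideanSpace ℝ (Fin n) →ₗ[ℝ] EuclideanSpace ℝ (Fin m))
    (hA : ∀ i, stdBasis n i ∉ LinearMap.ker A)
    (xstar c : EuclideanSpace ℝ (Fin n))
    (hc1 : ∀ i, xstar i ≠ 0 →
      ⟪proj A (stdBasis n i), c⟫ = ‖proj A (stdBasis n i)‖ * Real.sign (xstar i))
    (hc2 : ∀ i, xstar i = 0 →
      |⟪proj A (stdBasis n i), c⟫| < ‖proj A (stdBasis n i)‖)
 :
    ∀ x : EuclideanSpace ℝ (Fin n), A x = A xstar → wl1 A xstar ≤ wl1 A x := by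

  intro x hx
  set d : EuclideanSpace ℝ (Fin n) := proj A c with hd
  have key : ∀ v : EuclideanSpace ℝ (Fin n), ⟪proj A v, c⟫ = ∑ i, v i * d i := by
    intro v
    have h1 : ⟪proj A v, c⟫ = ⟪v, d⟫ :=
      Submodule.inner_starProjection_left_eq_right _ v c
    rw [h1, PiLp.inner_apply]
    simp [RCLike.inner_apply, mul_comm]
  have hdi : ∀ i, d i = ⟪proj A (stdBasis n i), c⟫ := by
    intro i
    rw [key (stdBasis n i)]
    simp [stdBasis, EuclideanSpace.single_apply]
  have hle : ∀ i, |d i| ≤ wgt A i := by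
    intro i
    rw [hdi i]
    by_cases h : xstar i = 0
    · exact (hc2 i h).le
    · rw [hc1 i h, abs_mul, abs_of_nonneg (norm_nonneg _)]
      have hs : |Real.sign (xstar i)| ≤ 1 := by
        rcases lt_trichotomy (xstar i) 0 with h' | h' | h'
        · simp [Real.sign_of_neg h']
        · exact absurd h' h
        · simp [Real.sign_of_pos h']
      have hn : (0 : ℝ) ≤ ‖proj A (stdBasis n i)‖ := norm_nonneg _
      calc ‖proj A (stdBasis n i)‖ * |Real.sign (xstar i)|
          ≤ ‖proj A (stdBasis n i)‖ * 1 := by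
            exact mul_le_mul_of_nonneg_left hs hn
        _ = wgt A i := by rw [mul_one]; rfl
  have hker : x - xstar ∈ LinearMap.ker A := by
    simp [LinearMap.mem_ker, map_sub, hx]
  have hproj : proj A x = proj A xstar := by
    have hmem : x - xstar ∈ ((LinearMap.ker A)ᗮ)ᗮ := by
      rw [Submodule.orthogonal_orthogonal]
      exact hker
    have h0 : Submodule.orthogonalProjection (LinearMap.ker A)ᗮ (x - xstar) = 0 :=
      Submodule.orthogonalProjectionOnto_apply_of_mem_orthogonal hmem
    have h1 := map_sub (Submodule.orthogonalProjection (LinearMap.ker A)ᗮ) x xstar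
    rw [h0] at h1
    have h2 := congrArg (fun z : (LinearMap.ker A)ᗮ => (z : EuclideanSpace ℝ (Fin n))) h1
    simp only [Submodule.coe_sub, Submodule.coe_zero] at h2
    unfold proj
    exact sub_eq_zero.mp h2.symm
  have e1 : wl1 A xstar = ∑ i, xstar i * d i := by
    unfold wl1
    apply Finset.sum_congr rfl
    intro i _
    by_cases h : xstar i = 0
    · simp [h]
    · rw [hdi i, hc1 i h]
      have hsgn : xstar i * Real.sign (xstar i) = |xstar i| := by
        rcases lt_trichotomy (xstar i) 0 with h' | h' | h'
        · rw [Real.sign_of_neg h', abs_of_neg h']; ring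
        · exact absurd h' h
        · rw [Real.sign_of_pos h', abs_of_pos h']; ring
      show wgt A i * |xstar i| = _
      rw [← hsgn]
      unfold wgt
      ring
  have e2 : (∑ i, x i * d i) ≤ wl1 A x := by
    unfold wl1
    apply Finset.sum_le_sum
    intro i _
    calc x i * d i ≤ |x i * d i| := le_abs_self _
      _ = |x i| * |d i| := abs_mul _ _
      _ ≤ |x i| * wgt A i := mul_le_mul_of_nonneg_left (hle i) (abs_nonneg _)
      _ = wgt A i * |x i| := mul_comm _ _
  calc wl1 A xstar = ∑ i, xstar i * d i := e1
    _ = ⟪proj A xstar, c⟫ := (key xstar).symm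
    _ = ⟪proj A x, c⟫ := by rw [hproj]
    _ = ∑ i, x i * d i := key x
    _ ≤ wl1 A x := e2
end

section
/- Let x* ∈ ℝⁿ with support J = supp(x*). Suppose there exists a vector c ∈ ℝⁿ such that ⟨P e_i, c⟩ = ‖P e_i‖₂ · sgn(x*_i) for every i ∈ J and |⟨P e_i, c⟩| < ‖P e_i‖₂ for every i ∉ J. Then every minimizer y of the weighted ℓ1 norm ‖W x‖₁ = Σ_{i=1}^n w_i |x_i| over all x ∈ ℝⁿ satisfying A x = A x* has supp(y) ⊆ supp(x*). -/
open scoped RealInnerProductSpace Classical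

lemma inner_proj_single {m n : ℕ} (A : EuclideanSpace ℝ (Fin n) →ₗ[ℝ] EuclideanSpace ℝ (Fin m))
    (c : EuclideanSpace ℝ (Fin n)) (i : Fin n) :
    ⟪proj A (stdBasis n i), c⟫ = proj A c i := by
  unfold proj stdBasis
  simp only [Submodule.orthogonalProjection, ← Submodule.starProjection_apply]
  rw [Submodule.inner_starProjection_left_eq_right]
  simp [EuclideanSpace.inner_single_left]

lemma inner_proj_eq {m n : ℕ} (A : EuclideanSpace ℝ (Fin n) →ₗ[ℝ] EuclideanSpace ℝ (Fin m))
    (c x : EuclideanSpace ℝ (Fin n)) :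
    ⟪proj A x, c⟫ = ∑ i, x i * proj A c i := by
  unfold proj
  simp only [Submodule.orthogonalProjection, ← Submodule.starProjection_apply]
  rw [Submodule.inner_starProjection_left_eq_right]
  simp [PiLp.inner_apply, mul_comm]

lemma proj_ker {m n : ℕ} (A : EuclideanSpace ℝ (Fin n) →ₗ[ℝ] EuclideanSpace ℝ (Fin m))
    (u : EuclideanSpace ℝ (Fin n)) (hu : u ∈ LinearMap.ker A) : proj A u = 0 := by
  unfold proj
  simp only [Submodule.orthogonalProjection]
  rw [Submodule.orthogonalProjectionOnto_apply_of_mem_orthogonal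
    (Submodule.le_orthogonal_orthogonal _ hu)]
  simp

lemma proj_sub {m n : ℕ} (A : EuclideanSpace ℝ (Fin n) →ₗ[ℝ] EuclideanSpace ℝ (Fin m))
    (x z : EuclideanSpace ℝ (Fin n)) : proj A (x - z) = proj A x - proj A z := by
  unfold proj; rw [map_sub]; rfl

theorem stmt1 {m n : ℕ}
    (A : EuclideanSpace ℝ (Fin n) →ₗ[ℝ] EuclideanSpace ℝ (Fin m))
    (hA : ∀ i, stdBasis n i ∉ LinearMap.ker A)
    (xstar c : EuclideanSpace ℝ (Fin n))
    (hc1 : ∀ i, xstar i ≠ 0 →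
      ⟪proj A (stdBasis n i), c⟫ = ‖proj A (stdBasis n i)‖ * Real.sign (xstar i))
    (hc2 : ∀ i, xstar i = 0 →
      |⟪proj A (stdBasis n i), c⟫| < ‖proj A (stdBasis n i)‖)
    (y : EuclideanSpace ℝ (Fin n)) (hfeas : A y = A xstar)
    (hmin : ∀ x : EuclideanSpace ℝ (Fin n), A x = A xstar → wl1 A y ≤ wl1 A x) :
    ∀ k, y k ≠ 0 → xstar k ≠ 0 := by
  intro k hky
  by_contra hk
  -- abbreviation for dual vector entries
  set pc : EuclideanSpace ℝ (Fin n) := proj A c with hpc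
  -- |pc i| ≤ wgt A i for all i
  have hle : ∀ i, |pc i| ≤ wgt A i := by
    intro i
    by_cases hi : xstar i = 0
    · exact le_of_lt (by rw [hpc, ← inner_proj_single A c i]; exact hc2 i hi)
    · rw [hpc, ← inner_proj_single A c i, hc1 i hi, abs_mul, abs_norm]
      rcases lt_or_gt_of_ne hi with h | h
      · rw [Real.sign_of_neg h]; simp [wgt]
      · rw [Real.sign_of_pos h]; simp [wgt]
  have hlt : |pc k| < wgt A k := by
    rw [hpc, ← inner_proj_single A c k]; exact hc2 k hk
  -- projections agree on feasible points
  have hproj : proj A y = proj A xstar := by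
    have : y - xstar ∈ LinearMap.ker A := by
      simp [LinearMap.mem_ker, map_sub, hfeas]
    have h0 := proj_ker A _ this
    rw [proj_sub] at h0
    exact sub_eq_zero.mp h0
  -- wl1 xstar equals inner product
  have hxs : wl1 A xstar = ⟪proj A xstar, c⟫ := by
    rw [inner_proj_eq, wl1]
    refine Finset.sum_congr rfl fun i _ => ?_
    rw [← inner_proj_single A c i]
    by_cases hi : xstar i = 0
    · simp [hi]
    · rw [hc1 i hi, wgt]
      rcases lt_or_gt_of_ne hi with h | h
      · rw [abs_of_neg h, Real.sign_of_neg h]; ring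
      · rw [abs_of_pos h, Real.sign_of_pos h]; ring
  have h1 : wl1 A y ≤ wl1 A xstar := hmin xstar rfl
  have h2 : ∑ i, |pc i| * |y i| < wl1 A y := by
    rw [wl1]
    refine Finset.sum_lt_sum (fun i _ => mul_le_mul_of_nonneg_right (hle i) (abs_nonneg _)) ?_
    exact ⟨k, Finset.mem_univ k,
      mul_lt_mul_of_pos_right hlt (abs_pos.mpr hky)⟩
  have h3 : ⟪proj A y, c⟫ ≤ ∑ i, |pc i| * |y i| := by
    rw [inner_proj_eq]
    refine Finset.sum_le_sum fun i _ => ?_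
    calc y i * pc i ≤ |y i * pc i| := le_abs_self _
      _ = |pc i| * |y i| := by rw [abs_mul]; ring
  rw [hproj, ← hxs] at h3
  linarith
end

section
/- Let x* ∈ ℝⁿ with support J = supp(x*). Suppose there exist real numbers a_j, j ∈ J, such that the vector v = Σ_{j∈J} a_j W⁻¹ P e_j satisfies (C.1): v_i = sgn(x*_i) for all i ∈ J, and (C.2): v_i ∈ (−1, 1) for all i ∉ J. Let α > 0 be such that sgn(x*_j − α a_j) = sgn(x*_j) for all j ∈ J. Then y*_α = Σ_{j∈J} (x*_j − α a_j) e_j is a minimizer over x ∈ ℝⁿ of the functional T_α(x) = ½ ‖P x − P x*‖₂² + α Σ_{i=1}^n w_i |x_i|. -/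
open scoped RealInnerProductSpace Classical

/-- `proj` as a linear map. -/
noncomputable def projL {m n : ℕ} (A : EuclideanSpace ℝ (Fin n) →ₗ[ℝ] EuclideanSpace ℝ (Fin m)) :
    EuclideanSpace ℝ (Fin n) →ₗ[ℝ] EuclideanSpace ℝ (Fin n) :=
  (LinearMap.ker A)ᗮ.subtype ∘ₗ (Submodule.orthogonalProjection (LinearMap.ker A)ᗮ).toLinearMap

lemma proj_eq_projL {m n : ℕ} (A : EuclideanSpace ℝ (Fin n) →ₗ[ℝ] EuclideanSpace ℝ (Fin m))
    (x : EuclideanSpace ℝ (Fin n)) : proj A x = projL A x := rfl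

lemma esum_apply {n : ℕ} {ι : Type*} (s : Finset ι) (f : ι → EuclideanSpace ℝ (Fin n))
    (i : Fin n) : (∑ j ∈ s, f j) i = ∑ j ∈ s, f j i := by
  induction s using Finset.cons_induction with
  | empty => rfl
  | cons a s ha ih => rw [Finset.sum_cons, Finset.sum_cons, ← ih]; rfl

lemma proj_inner_proj {m n : ℕ} (A : EuclideanSpace ℝ (Fin n) →ₗ[ℝ] EuclideanSpace ℝ (Fin m))
    (u x : EuclideanSpace ℝ (Fin n)) : ⟪proj A u, proj A x⟫ = ⟪proj A u, x⟫ := by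
  have h1 : ⟪proj A u, proj A x⟫
      = ⟪u, (Submodule.orthogonalProjection (LinearMap.ker A)ᗮ (proj A x) : EuclideanSpace ℝ (Fin n))⟫ :=
    Submodule.inner_starProjection_left_eq_right (𝕜 := ℝ) (LinearMap.ker A)ᗮ u (proj A x)
  have h2 : ⟪proj A u, x⟫ = ⟪u, proj A x⟫ :=
    Submodule.inner_starProjection_left_eq_right (𝕜 := ℝ) (LinearMap.ker A)ᗮ u x
  have h3 : Submodule.orthogonalProjection (LinearMap.ker A)ᗮ (proj A x)
      = Submodule.orthogonalProjection (LinearMap.ker A)ᗮ x :=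
    Submodule.orthogonalProjectionOnto_mem_subspace_eq_self _
  rw [proj, proj] at *
  rw [h1, h3, ← h2]

lemma wgt_ne_zero {m n : ℕ} (A : EuclideanSpace ℝ (Fin n) →ₗ[ℝ] EuclideanSpace ℝ (Fin m))
    (hA : ∀ i, stdBasis n i ∉ LinearMap.ker A) (i : Fin n) : wgt A i ≠ 0 := by
  rw [wgt, norm_ne_zero_iff, proj]
  intro h
  have : Submodule.orthogonalProjectionOnto (LinearMap.ker A)ᗮ (stdBasis n i) = 0 := by
    exact_mod_cast Subtype.ext h
  rw [Submodule.orthogonalProjectionOnto_eq_zero_iff, Submodule.orthogonal_orthogonal] at this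
  exact hA i this

lemma sign_mul_self_eq_abs (t : ℝ) : Real.sign t * t = |t| := by
  rcases lt_trichotomy t 0 with h | h | h
  · rw [Real.sign_of_neg h, abs_of_neg h]; ring
  · simp [h]
  · rw [Real.sign_of_pos h, abs_of_pos h]; ring

theorem stmt7 {m n : ℕ}
    (A : EuclideanSpace ℝ (Fin n) →ₗ[ℝ] EuclideanSpace ℝ (Fin m))
    (hA : ∀ i, stdBasis n i ∉ LinearMap.ker A)
    (xstar : EuclideanSpace ℝ (Fin n)) (a : Fin n → ℝ) (v : Fin n → ℝ)
    (hv : ∀ i, v i = ∑ j ∈ Finset.univ.filter (fun j => xstar j ≠ 0),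
      a j * ((wgt A i)⁻¹ * proj A (stdBasis n j) i))
    (hC1 : ∀ i, xstar i ≠ 0 → v i = Real.sign (xstar i))
    (hC2 : ∀ i, xstar i = 0 → v i ∈ Set.Ioo (-1 : ℝ) 1)
    (α : ℝ) (hα : 0 < α)
    (hsgn : ∀ j, xstar j ≠ 0 → Real.sign (xstar j - α * a j) = Real.sign (xstar j))
    (ystar : EuclideanSpace ℝ (Fin n))
    (hy : ystar = ∑ j ∈ Finset.univ.filter (fun j => xstar j ≠ 0),
      (xstar j - α * a j) • stdBasis n j)
 :
    ∀ x : EuclideanSpace ℝ (Fin n),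
      (1 / 2) * ‖proj A ystar - proj A xstar‖ ^ 2 + α * wl1 A ystar ≤ (1 / 2) * ‖proj A x - proj A xstar‖ ^ 2 + α * wl1 A x := by
  intro x
  classical
  set J := Finset.univ.filter (fun j => xstar j ≠ 0) with hJ
  -- coordinates of ystar
  have hyc : ∀ i, ystar i = if xstar i ≠ 0 then xstar i - α * a i else 0 := by
    intro i
    rw [hy, esum_apply]
    have : ∀ j, ((xstar j - α * a j) • stdBasis n j) i
        = if i = j then xstar j - α * a j else 0 := by
      intro j
      show (xstar j - α * a j) * (stdBasis n j) i = _
      simp [stdBasis, EuclideanSpace.single_apply]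
    simp only [this]
    rw [Finset.sum_ite_eq J i (fun j => xstar j - α * a j)]
    simp [hJ]
  -- |v i| ≤ 1
  have hv1 : ∀ i, |v i| ≤ 1 := by
    intro i
    by_cases h : xstar i = 0
    · have := hC2 i h
      rw [abs_le]; exact ⟨le_of_lt this.1, le_of_lt this.2⟩
    · rw [hC1 i h]
      rcases Real.sign_apply_eq (xstar i) with h' | h' | h' <;> rw [h'] <;> norm_num
  -- w_i v_i identity
  have hwv : ∀ i, wgt A i * v i = ∑ j ∈ J, a j * proj A (stdBasis n j) i := by
    intro i
    rw [hv i, Finset.mul_sum]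
    refine Finset.sum_congr rfl fun j _ => ?_
    field_simp [wgt_ne_zero A hA i]
  -- difference vector
  have hdiff : ystar - xstar = ∑ j ∈ J, (-(α * a j)) • stdBasis n j := by
    ext i
    show ystar i - xstar i = _
    rw [esum_apply]
    have : ∀ j, ((-(α * a j)) • stdBasis n j) i = if i = j then -(α * a j) else 0 := by
      intro j
      show (-(α * a j)) * (stdBasis n j) i = _
      simp [stdBasis, EuclideanSpace.single_apply]
    simp only [this]
    rw [Finset.sum_ite_eq J i (fun j => -(α * a j))]
    by_cases h : xstar i = 0
    · simp [hyc i, h, hJ]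
    · simp only [hyc i, hJ, Finset.mem_filter, Finset.mem_univ, true_and, ne_eq, h,
        not_false_eq_true, if_true]
      ring
  have hbproj : proj A ystar - proj A xstar = proj A (ystar - xstar) := by
    rw [proj_eq_projL A ystar, proj_eq_projL A xstar, proj_eq_projL, ← map_sub]
  -- coordinates of proj (ystar - xstar)
  have hbc : ∀ i, proj A (ystar - xstar) i = -(α * (wgt A i * v i)) := by
    intro i
    rw [hdiff, proj_eq_projL, map_sum]
    have step : (∑ j ∈ J, projL A ((-(α * a j)) • stdBasis n j)) i
        = ∑ j ∈ J, (-(α * a j)) * (projL A (stdBasis n j)) i := by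
      rw [esum_apply]
      refine Finset.sum_congr rfl fun j _ => ?_
      rw [map_smul]
      rfl
    rw [step, hwv i, Finset.mul_sum, neg_eq_neg_one_mul, Finset.mul_sum]
    refine Finset.sum_congr rfl fun j _ => ?_
    rw [← proj_eq_projL]; ring
  -- the key functional
  have key : ∀ z : EuclideanSpace ℝ (Fin n),
      ⟪proj A ystar - proj A xstar, proj A z⟫ + α * wl1 A z
        = α * ∑ i, wgt A i * (|z i| - v i * z i) := by
    intro z
    rw [hbproj, proj_inner_proj]
    have hinner : ⟪proj A (ystar - xstar), z⟫ = ∑ i, (-(α * (wgt A i * v i))) * z i := by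
      rw [PiLp.inner_apply]
      refine Finset.sum_congr rfl fun i _ => ?_
      rw [RCLike.inner_apply, conj_trivial, hbc i, mul_comm]
    rw [hinner, wl1, Finset.mul_sum, Finset.mul_sum, ← Finset.sum_add_distrib]
    refine Finset.sum_congr rfl fun i _ => ?_
    ring
  -- nonnegativity of key at any z
  have keynn : ∀ z : EuclideanSpace ℝ (Fin n),
      0 ≤ α * ∑ i, wgt A i * (|z i| - v i * z i) := by
    intro z
    apply mul_nonneg hα.le
    apply Finset.sum_nonneg
    intro i _
    apply mul_nonneg (norm_nonneg _)
    have : v i * z i ≤ |z i| := by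
      calc v i * z i ≤ |v i * z i| := le_abs_self _
        _ = |v i| * |z i| := abs_mul _ _
        _ ≤ 1 * |z i| := mul_le_mul_of_nonneg_right (hv1 i) (abs_nonneg _)
        _ = |z i| := one_mul _
    linarith
  -- key at ystar is zero
  have keyy : (∑ i, wgt A i * (|ystar i| - v i * ystar i)) = 0 := by
    apply Finset.sum_eq_zero
    intro i _
    by_cases h : xstar i = 0
    · have : ystar i = 0 := by rw [hyc i]; simp [h]
      simp [this]
    · have hyi : ystar i = xstar i - α * a i := by rw [hyc i]; simp [h]
      have : v i * ystar i = |ystar i| := by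
        rw [hC1 i h, ← hsgn i h, hyi, sign_mul_self_eq_abs]
      rw [this]; ring
  -- assemble
  have expand : ‖proj A x - proj A xstar‖ ^ 2
      = ‖proj A x - proj A ystar‖ ^ 2
        + 2 * ⟪proj A x - proj A ystar, proj A ystar - proj A xstar⟫
        + ‖proj A ystar - proj A xstar‖ ^ 2 := by
    have h : proj A x - proj A xstar
        = (proj A x - proj A ystar) + (proj A ystar - proj A xstar) := by abel
    rw [h, norm_add_sq_real]
  have hinx := key x
  have hiny := key ystar
  rw [keyy, mul_zero] at hiny
  have hsplit : ⟪proj A x - proj A ystar, proj A ystar - proj A xstar⟫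
      = ⟪proj A ystar - proj A xstar, proj A x⟫ - ⟪proj A ystar - proj A xstar, proj A ystar⟫ := by
    rw [real_inner_comm, inner_sub_right]
  have hxnn := keynn x
  have hsq : (0:ℝ) ≤ ‖proj A x - proj A ystar‖ ^ 2 := sq_nonneg _
  nlinarith [hinx, hiny, hxnn, hsq, expand, hsplit]
end

section
/- Let x* ∈ ℝⁿ with support J = supp(x*), and let b† = A x*. Suppose there exists a vector c ∈ ℝⁿ such that ⟨P e_i, c⟩ = ‖P e_i‖₂ · sgn(x*_i) for every i ∈ J and |⟨P e_i, c⟩| < ‖P e_i‖₂ for every i ∉ J, and suppose A is injective on the support of x* (the only q with supp(q) ⊆ supp(x*) and A q = 0 is q = 0). Then for every C > 0 there exists c₀ > 0 such that for every δ > 0, every b^δ ∈ ℝᵐ with ‖b^δ − b†‖₂ ≤ δ, and every minimizer x_α of the functional x ↦ ½ ‖A x − b^δ‖₂² + α Σ_{i=1}^n w_i |x_i| with α = C δ, one has ‖W (x_α − x*)‖₂ ≤ c₀ δ. -/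
set_option synthInstance.maxHeartbeats 1000000
set_option maxHeartbeats 2000000


open scoped RealInnerProductSpace Classical

lemma antilip {E F : Type*} [NormedAddCommGroup E] [NormedSpace ℝ E] [FiniteDimensional ℝ E]
    [NormedAddCommGroup F] [NormedSpace ℝ F]
    (A : E →ₗ[ℝ] F) (S : Submodule ℝ E) (hS : ∀ u ∈ S, A u = 0 → u = 0) :
    ∃ K : ℝ, 0 ≤ K ∧ ∀ u ∈ S, ‖u‖ ≤ K * ‖A u‖ := by
  set B : S →ₗ[ℝ] F := A.comp S.subtype with hB
  have hBinj : Function.Injective B := by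
    rw [injective_iff_map_eq_zero]
    intro u hu
    exact Subtype.ext (hS u.1 u.2 hu)
  let e : S ≃ₗ[ℝ] LinearMap.range B := LinearEquiv.ofInjective B hBinj
  let g := LinearMap.toContinuousLinearMap (e.symm.toLinearMap)
  refine ⟨‖g‖, g.opNorm_nonneg, fun u hu => ?_⟩
  have h1 : e.symm (e ⟨u, hu⟩) = ⟨u, hu⟩ := e.symm_apply_apply _
  have h2 : ‖(⟨u, hu⟩ : S)‖ = ‖g (e ⟨u, hu⟩)‖ := by
    rw [show g (e ⟨u, hu⟩) = e.symm (e ⟨u, hu⟩) from rfl, h1]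
  have h3 : ‖g (e ⟨u, hu⟩)‖ ≤ ‖g‖ * ‖e ⟨u, hu⟩‖ := g.le_opNorm _
  have h4 : ‖e ⟨u, hu⟩‖ = ‖A u‖ := by
    have : ((e ⟨u, hu⟩ : LinearMap.range B) : F) = B ⟨u, hu⟩ := rfl
    rw [show ‖e ⟨u, hu⟩‖ = ‖((e ⟨u, hu⟩ : LinearMap.range B) : F)‖ from rfl, this]
    rfl
  calc ‖u‖ = ‖(⟨u, hu⟩ : S)‖ := rfl
    _ ≤ ‖g‖ * ‖A u‖ := by rw [h2, ← h4]; exact h3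

theorem stmt11 {m n : ℕ}
    (A : EuclideanSpace ℝ (Fin n) →ₗ[ℝ] EuclideanSpace ℝ (Fin m))
    (hA : ∀ i, stdBasis n i ∉ LinearMap.ker A)
    (xstar c : EuclideanSpace ℝ (Fin n))
    (hc1 : ∀ i, xstar i ≠ 0 →
      ⟪proj A (stdBasis n i), c⟫ = ‖proj A (stdBasis n i)‖ * Real.sign (xstar i))
    (hc2 : ∀ i, xstar i = 0 →
      |⟪proj A (stdBasis n i), c⟫| < ‖proj A (stdBasis n i)‖)
    (hinj : ∀ q : EuclideanSpace ℝ (Fin n), (∀ i, q i ≠ 0 → xstar i ≠ 0) → A q = 0 → q = 0) :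
    ∀ C : ℝ, 0 < C → ∃ c₀ : ℝ, 0 < c₀ ∧
      ∀ δ : ℝ, 0 < δ → ∀ bδ : EuclideanSpace ℝ (Fin m), ‖bδ - A xstar‖ ≤ δ →
        ∀ xα : EuclideanSpace ℝ (Fin n),
          (∀ x : EuclideanSpace ℝ (Fin n),
            (1 / 2) * ‖A xα - bδ‖ ^ 2 + (C * δ) * wl1 A xα ≤
              (1 / 2) * ‖A x - bδ‖ ^ 2 + (C * δ) * wl1 A x) →
          Real.sqrt (∑ i, (wgt A i * (xα i - xstar i)) ^ 2) ≤ c₀ * δ := by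
  intro C hC
  -- basic facts
  have hw : ∀ i, 0 < wgt A i := by
    intro i
    rw [wgt, norm_pos_iff]
    intro h
    apply hA i
    have h0 : Submodule.orthogonalProjectionOnto (LinearMap.ker A)ᗮ (stdBasis n i) = 0 := Subtype.ext h
    rw [Submodule.orthogonalProjectionOnto_eq_zero_iff] at h0
    rwa [Submodule.orthogonal_orthogonal] at h0
  have hinner : ∀ z y : EuclideanSpace ℝ (Fin n), ⟪z, y⟫ = ∑ i, z i * y i := by
    intro z y
    simp [PiLp.inner_apply, RCLike.inner_apply, conj_trivial]
    exact Finset.sum_congr rfl fun i _ => mul_comm _ _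
  have hAy : ∀ y : EuclideanSpace ℝ (Fin n), A y = ∑ j, y j • A (stdBasis n j) := by
    intro y
    conv_lhs => rw [← (EuclideanSpace.basisFun (Fin n) ℝ).toBasis.sum_repr y]
    rw [map_sum]
    refine Finset.sum_congr rfl fun j _ => ?_
    rw [map_smul]
    have h1 : (EuclideanSpace.basisFun (Fin n) ℝ).toBasis.repr y j = y j := by
      simp [EuclideanSpace.basisFun_repr]
    have h2 : ((EuclideanSpace.basisFun (Fin n) ℝ).toBasis j) = stdBasis n j := by
      simp [stdBasis, EuclideanSpace.basisFun_apply]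
    rw [h1, h2]
  have hcoord : ∀ (x : EuclideanSpace ℝ (Fin n)) i, |x i| ≤ ‖x‖ := by
    intro x i
    have h := abs_real_inner_le_norm (stdBasis n i) x
    rw [hinner] at h
    simpa [stdBasis, EuclideanSpace.norm_single, EuclideanSpace.single_apply,
      Finset.sum_ite_eq] using h
  -- the dual certificate η
  set η : EuclideanSpace ℝ (Fin n) := proj A c with hηdef
  have hηmem : η ∈ (LinearMap.ker A)ᗮ := SetLike.coe_mem (Submodule.orthogonalProjectionOnto (LinearMap.ker A)ᗮ c)
  have hηi : ∀ i, η i = ⟪proj A (stdBasis n i), c⟫ := by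
    intro i
    have h1 : ⟪proj A (stdBasis n i), c⟫ = ⟪stdBasis n i, η⟫ :=
      Submodule.inner_starProjection_left_eq_right _ _ _
    rw [h1, stdBasis, EuclideanSpace.inner_single_left]
    simp
  have hη1 : ∀ i, xstar i ≠ 0 → η i = wgt A i * Real.sign (xstar i) := by
    intro i hi; rw [hηi i, hc1 i hi]; rfl
  have hη2 : ∀ i, xstar i = 0 → |η i| < wgt A i := by
    intro i hi; rw [hηi i]; exact hc2 i hi
  -- anti-Lipschitz constant on (ker A)ᗮ
  obtain ⟨K₀, hK₀0, hK₀⟩ := antilip A (LinearMap.ker A)ᗮ (by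
    intro u hu hAu
    have hmem : u ∈ LinearMap.ker A := LinearMap.mem_ker.mpr hAu
    have : ⟪u, u⟫ = 0 := hu u hmem
    exact inner_self_eq_zero.mp this)
  -- the support-restriction map R and its anti-Lipschitz constant
  let R : EuclideanSpace ℝ (Fin n) →ₗ[ℝ] EuclideanSpace ℝ (Fin n) :=
    { toFun := fun x => (WithLp.toLp 2 (fun i => if xstar i = 0 then 0 else x i) : EuclideanSpace ℝ (Fin n))
      map_add' := by
        intro x y; ext i
        by_cases h : xstar i = 0 <;> simp [h, PiLp.add_apply]
      map_smul' := by
        intro a x; ext i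
        by_cases h : xstar i = 0 <;> simp [h, PiLp.smul_apply] }
  have hRapp : ∀ (x : EuclideanSpace ℝ (Fin n)) j, R x j = if xstar j = 0 then 0 else x j :=
    fun _ _ => rfl
  obtain ⟨K₃, hK₃0, hK₃⟩ := antilip A (LinearMap.range R) (by
    rintro u ⟨x, rfl⟩ hAu
    refine hinj _ (fun i hi hxi => hi ?_) hAu
    rw [hRapp, if_pos hxi])
  -- constants
  obtain ⟨L, hLdef⟩ : ∃ L : ℝ, L = ‖η‖ * K₀ := ⟨_, rfl⟩
  have hL0 : 0 ≤ L := hLdef ▸ mul_nonneg (norm_nonneg _) hK₀0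
  obtain ⟨K₁, hK₁def⟩ : ∃ K₁ : ℝ, K₁ = 1 + 4 * C * L := ⟨_, rfl⟩
  have hK₁1 : (1:ℝ) ≤ K₁ := by rw [hK₁def]; nlinarith
  obtain ⟨K₂, hK₂def⟩ : ∃ K₂ : ℝ, K₂ = 1 / (2 * C) + L * (K₁ + 1) := ⟨_, rfl⟩
  have hK₂0 : 0 ≤ K₂ := by
    rw [hK₂def]
    have h1 : (0:ℝ) ≤ L * (K₁ + 1) := mul_nonneg hL0 (by linarith)
    have h2 : (0:ℝ) ≤ 1 / (2 * C) := by positivity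
    linarith
  obtain ⟨Moff, hMoffdef⟩ : ∃ Moff : ℝ,
      Moff = ∑ j, (if xstar j = 0 then K₂ / (wgt A j - |η j|) else 0) * ‖A (stdBasis n j)‖ :=
    ⟨_, rfl⟩
  have hMoff0 : 0 ≤ Moff := by
    rw [hMoffdef]
    apply Finset.sum_nonneg
    intro j _
    apply mul_nonneg _ (norm_nonneg _)
    by_cases hx : xstar j = 0
    · rw [if_pos hx]
      exact div_nonneg hK₂0 (by linarith [hη2 j hx])
    · rw [if_neg hx]
  obtain ⟨Gon, hGondef⟩ : ∃ Gon : ℝ, Gon = K₃ * ((K₁ + 1) + Moff) := ⟨_, rfl⟩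
  have hGon0 : 0 ≤ Gon := hGondef ▸ mul_nonneg hK₃0 (by linarith [hMoff0])
  obtain ⟨G, hGoff, hGons⟩ : ∃ G : Fin n → ℝ,
      (∀ i, xstar i = 0 → G i = K₂ / (wgt A i - |η i|)) ∧
      (∀ i, xstar i ≠ 0 → G i = Gon) :=
    ⟨fun i => if xstar i = 0 then K₂ / (wgt A i - |η i|) else Gon,
      fun i h => by simp only [if_pos h], fun i h => by simp only [if_neg h]⟩
  have hG0 : ∀ i, 0 ≤ G i := by
    intro i
    by_cases hx : xstar i = 0
    · rw [hGoff i hx]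
      exact div_nonneg hK₂0 (by linarith [hη2 i hx])
    · rw [hGons i hx]
      exact hGon0
  refine ⟨Real.sqrt (∑ i, (wgt A i * G i) ^ 2) + 1,
    add_pos_of_nonneg_of_pos (Real.sqrt_nonneg _) one_pos, ?_⟩
  intro δ hδ bδ hbδ xα hmin
  set r : ℝ := ‖A xα - bδ‖ with hrdef
  have hr0 : (0:ℝ) ≤ r := norm_nonneg _
  set z : EuclideanSpace ℝ (Fin n) := xα - xstar with hzdef
  have hz : ∀ i, z i = xα i - xstar i := fun _ => rfl
  -- ‖A z‖ ≤ r + δ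
  have hAdle : ‖A z‖ ≤ r + δ := by
    have h1 : A z = (A xα - bδ) + (bδ - A xstar) := by rw [hzdef, map_sub]; abel
    rw [h1]
    exact (norm_add_le _ _).trans (add_le_add le_rfl hbδ)
  -- the inner product bound
  have habs : |⟪η, z⟫| ≤ L * (r + δ) := by
    have hPz : z - proj A z ∈ LinearMap.ker A := by
      have h := Submodule.sub_starProjection_mem_orthogonal (K := (LinearMap.ker A)ᗮ) z
      rwa [Submodule.orthogonal_orthogonal] at h
    have hAz : A (proj A z) = A z := by
      have h : A (z - proj A z) = 0 := hPz
      rw [map_sub] at h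
      exact (sub_eq_zero.mp h).symm
    have hip : ⟪η, z⟫ = ⟪η, proj A z⟫ := by
      have h0 : ⟪η, z - proj A z⟫ = 0 := real_inner_comm η (z - proj A z) ▸ hηmem _ hPz
      have h1 : ⟪η, z⟫ = ⟪η, proj A z⟫ + ⟪η, z - proj A z⟫ := by
        rw [← inner_add_right]
        congr 1
        abel
      rw [h1, h0, add_zero]
    have h2 : |⟪η, proj A z⟫| ≤ ‖η‖ * ‖proj A z‖ := abs_real_inner_le_norm _ _
    have h3 : ‖proj A z‖ ≤ K₀ * ‖A (proj A z)‖ := hK₀ _ (SetLike.coe_mem (Submodule.orthogonalProjectionOnto (LinearMap.ker A)ᗮ z))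
    rw [hAz] at h3
    have h4 : ‖η‖ * ‖proj A z‖ ≤ ‖η‖ * (K₀ * (r + δ)) := by
      apply mul_le_mul_of_nonneg_left _ (norm_nonneg η)
      calc ‖proj A z‖ ≤ K₀ * ‖A z‖ := h3
        _ ≤ K₀ * (r + δ) := mul_le_mul_of_nonneg_left hAdle hK₀0
    rw [hip]
    calc |⟪η, proj A z⟫| ≤ ‖η‖ * ‖proj A z‖ := h2
      _ ≤ ‖η‖ * (K₀ * (r + δ)) := h4
      _ = L * (r + δ) := by rw [hLdef]; ring
  -- minimality at xstar
  have hδ'2 : ‖A xstar - bδ‖ ^ 2 ≤ δ ^ 2 := by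
    have h1 : ‖A xstar - bδ‖ ≤ δ := by rw [norm_sub_rev]; exact hbδ
    exact pow_le_pow_left₀ (norm_nonneg _) h1 2
  have hm := hmin xstar
  -- the Bregman terms
  obtain ⟨T, hTdef⟩ : ∃ T : Fin n → ℝ,
      T = fun i => wgt A i * |xα i| - wgt A i * |xstar i| - η i * (xα i - xstar i) := ⟨_, rfl⟩
  have hT0 : ∀ i, 0 ≤ T i := by
    intro i
    simp only [hTdef]
    by_cases hx : xstar i = 0
    · have h1 : η i * xα i ≤ |η i| * |xα i| := by
        calc η i * xα i ≤ |η i * xα i| := le_abs_self _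
          _ = |η i| * |xα i| := abs_mul _ _
      have h2 := (hη2 i hx).le
      simp only [hx, abs_zero, sub_zero, mul_zero]
      nlinarith [abs_nonneg (xα i)]
    · rw [hη1 i hx]
      rcases lt_or_gt_of_ne hx with h | h
      · rw [Real.sign_of_neg h, abs_of_neg h]
        nlinarith [neg_abs_le (xα i), (hw i).le]
      · rw [Real.sign_of_pos h, abs_of_pos h]
        nlinarith [le_abs_self (xα i), (hw i).le]
  have hTi : ∀ i, xstar i = 0 → (wgt A i - |η i|) * |xα i| ≤ T i := by
    intro i hx
    simp only [hTdef]
    have h1 : η i * xα i ≤ |η i| * |xα i| := by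
      calc η i * xα i ≤ |η i * xα i| := le_abs_self _
        _ = |η i| * |xα i| := abs_mul _ _
    simp only [hx, abs_zero, sub_zero, mul_zero]
    nlinarith
  have hipz : ⟪η, z⟫ = ∑ i, η i * (xα i - xstar i) := by
    rw [hinner]
    exact Finset.sum_congr rfl fun i _ => by rw [hz]
  have hTsum : ∑ i, T i = wl1 A xα - wl1 A xstar - ⟪η, z⟫ := by
    rw [hipz, hTdef, wl1, wl1, ← Finset.sum_sub_distrib, ← Finset.sum_sub_distrib]
  -- main energy inequality
  have hTsumnn : 0 ≤ ∑ i, T i := Finset.sum_nonneg fun i _ => hT0 i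
  have hCδ : (0:ℝ) < C * δ := mul_pos hC hδ
  have hmain : (1/2) * r^2 + (C*δ) * (∑ i, T i) ≤ (1/2) * δ^2 + (C*δ) * (L*(r+δ)) := by
    have e1 : (C*δ) * (∑ i, T i)
        = (C*δ) * wl1 A xα - (C*δ) * wl1 A xstar - (C*δ) * ⟪η, z⟫ := by
      rw [hTsum]; ring
    have h2 : -⟪η, z⟫ ≤ L * (r + δ) := by linarith [(abs_le.mp habs).1]
    have h3 : (C*δ) * -⟪η, z⟫ ≤ (C*δ) * (L*(r+δ)) := mul_le_mul_of_nonneg_left h2 hCδ.le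
    nlinarith [hm, hδ'2]
  -- residual bound : r ≤ K₁ δ
  have hr : r ≤ K₁ * δ := by
    have key : (1/2) * r^2 ≤ (1/2) * δ^2 + (C*δ) * (L*(r+δ)) := by
      nlinarith [mul_le_mul_of_nonneg_left hTsumnn hCδ.le]
    rw [hK₁def]
    rcases le_or_gt r δ with h | h
    · nlinarith [mul_nonneg (mul_nonneg hC.le hL0) hδ.le]
    · have h1 : C * L * δ * δ ≤ C * L * δ * r :=
        mul_le_mul_of_nonneg_left h.le (by positivity)
      have h2 : δ * δ ≤ δ * r := mul_le_mul_of_nonneg_left h.le hδ.le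
      nlinarith
  -- Bregman distance bound : ∑ T ≤ K₂ δ
  have hTbnd : ∑ i, T i ≤ K₂ * δ := by
    have key2 : (C*δ) * (∑ i, T i) ≤ (1/2) * δ^2 + (C*δ) * (L*(r+δ)) := by
      nlinarith [hmain, sq_nonneg r]
    have h4 : (C*δ) * (L*(r+δ)) ≤ (C*δ) * (L*((K₁+1)*δ)) := by
      apply mul_le_mul_of_nonneg_left _ hCδ.le
      apply mul_le_mul_of_nonneg_left _ hL0
      nlinarith
    have h5 : (C*δ) * (K₂*δ) = (1/2) * δ^2 + (C*δ) * (L*((K₁+1)*δ)) := by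
      rw [hK₂def]; field_simp
    have h6 : (C*δ) * (∑ i, T i) ≤ (C*δ) * (K₂*δ) := by linarith
    exact le_of_mul_le_mul_left h6 hCδ
  -- off-support coordinate bound
  have hoff : ∀ i, xstar i = 0 → |xα i| ≤ (K₂ / (wgt A i - |η i|)) * δ := by
    intro i hx
    have h1 : (wgt A i - |η i|) * |xα i| ≤ T i := hTi i hx
    have h2 : T i ≤ ∑ j, T j := Finset.single_le_sum (fun j _ => hT0 j) (Finset.mem_univ i)
    have hpos : 0 < wgt A i - |η i| := by linarith [hη2 i hx]
    rw [div_mul_eq_mul_div, le_div_iff₀ hpos]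
    nlinarith
  -- bound on off-support residual image
  have hAvz : ‖A (z - R z)‖ ≤ Moff * δ := by
    rw [hAy (z - R z)]
    calc ‖∑ j, (z - R z) j • A (stdBasis n j)‖
        ≤ ∑ j, ‖(z - R z) j • A (stdBasis n j)‖ := norm_sum_le _ _
      _ = ∑ j, |(z - R z) j| * ‖A (stdBasis n j)‖ := by
          simp [norm_smul, Real.norm_eq_abs]
      _ ≤ ∑ j, ((if xstar j = 0 then K₂ / (wgt A j - |η j|) else 0) * δ)
            * ‖A (stdBasis n j)‖ := by
          apply Finset.sum_le_sum
          intro j _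
          apply mul_le_mul_of_nonneg_right _ (norm_nonneg _)
          have happ : (z - R z) j = z j - (if xstar j = 0 then 0 else z j) := rfl
          by_cases hx : xstar j = 0
          · have hzj : (z - R z) j = xα j := by
              rw [happ, if_pos hx, sub_zero, hz, hx, sub_zero]
            rw [hzj, if_pos hx]
            exact hoff j hx
          · have hzj : (z - R z) j = 0 := by rw [happ, if_neg hx, sub_self]
            rw [hzj, if_neg hx, abs_zero, zero_mul]
      _ = Moff * δ := by
          rw [hMoffdef, Finset.sum_mul]
          apply Finset.sum_congr rfl
          intro j _
          ring
  -- on-support coordinate bound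
  have hon : ∀ i, xstar i ≠ 0 → |xα i - xstar i| ≤ Gon * δ := by
    intro i hx
    have hu : R z ∈ LinearMap.range R := ⟨z, rfl⟩
    have h1 : |xα i - xstar i| = |R z i| := by
      rw [hRapp, if_neg hx, hz]
    have h2 : |R z i| ≤ ‖R z‖ := hcoord _ i
    have h3 : ‖R z‖ ≤ K₃ * ‖A (R z)‖ := hK₃ _ hu
    have h4 : ‖A (R z)‖ ≤ (r + δ) + Moff * δ := by
      have e : A (R z) = A z - A (z - R z) := by
        rw [map_sub A z (R z)]
        exact (sub_sub_cancel (A z) (A (R z))).symm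
      rw [e]
      exact (norm_sub_le _ _).trans (add_le_add hAdle hAvz)
    have h5 : ‖A (R z)‖ ≤ (K₁ + 1) * δ + Moff * δ := by nlinarith
    rw [hGondef]
    calc |xα i - xstar i| ≤ K₃ * ‖A (R z)‖ := by rw [h1]; exact h2.trans h3
      _ ≤ K₃ * ((K₁ + 1) * δ + Moff * δ) := mul_le_mul_of_nonneg_left h5 hK₃0
      _ = K₃ * ((K₁ + 1) + Moff) * δ := by ring
  -- combine coordinatewise bounds
  have hcomb : ∀ i, |xα i - xstar i| ≤ G i * δ := by
    intro i
    by_cases hx : xstar i = 0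
    · rw [hGoff i hx, hx, sub_zero]
      exact hoff i hx
    · rw [hGons i hx]
      exact hon i hx
  -- conclude
  have hfin : ∀ i, (wgt A i * (xα i - xstar i)) ^ 2 ≤ (wgt A i * G i) ^ 2 * δ ^ 2 := by
    intro i
    have hb : |wgt A i * (xα i - xstar i)| ≤ wgt A i * G i * δ := by
      rw [abs_mul, abs_of_pos (hw i)]
      have := hcomb i
      nlinarith [(hw i).le]
    calc (wgt A i * (xα i - xstar i)) ^ 2 = |wgt A i * (xα i - xstar i)| ^ 2 := (sq_abs _).symm
      _ ≤ (wgt A i * G i * δ) ^ 2 := pow_le_pow_left₀ (abs_nonneg _) hb 2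
      _ = (wgt A i * G i) ^ 2 * δ ^ 2 := by ring
  have hsum : ∑ i, (wgt A i * (xα i - xstar i)) ^ 2 ≤ (∑ i, (wgt A i * G i) ^ 2) * δ ^ 2 := by
    rw [Finset.sum_mul]
    exact Finset.sum_le_sum fun i _ => hfin i
  have hs0 : (0:ℝ) ≤ ∑ i, (wgt A i * G i) ^ 2 := Finset.sum_nonneg fun i _ => sq_nonneg _
  calc Real.sqrt (∑ i, (wgt A i * (xα i - xstar i)) ^ 2)
      ≤ Real.sqrt ((∑ i, (wgt A i * G i) ^ 2) * δ ^ 2) := Real.sqrt_le_sqrt hsum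
    _ = Real.sqrt (∑ i, (wgt A i * G i) ^ 2) * δ := by
        rw [Real.sqrt_mul hs0, Real.sqrt_sq hδ.le]
    _ ≤ (Real.sqrt (∑ i, (wgt A i * G i) ^ 2) + 1) * δ := by nlinarith
end

section
/- Assume the non-parallel condition (NP): A e_i ≠ η A e_j for all indices i ≠ j and all η ∈ ℝ. Fix an index j and consider the vector u = W⁻¹ P e_j, i.e., u_i = w_i⁻¹ (P e_j)_i. Then |u_i| < |u_j| for every i ≠ j (so j is the unique index maximizing |u_i|), and u_j = ‖P e_j‖₂ ≤ 1. -/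
open scoped RealInnerProductSpace Classical

lemma proj_eq_zero_iff {m n : ℕ} (A : EuclideanSpace ℝ (Fin n) →ₗ[ℝ] EuclideanSpace ℝ (Fin m))
    (x : EuclideanSpace ℝ (Fin n)) : proj A x = 0 ↔ x ∈ LinearMap.ker A := by
  rw [proj]
  rw [show (0 : EuclideanSpace ℝ (Fin n)) = ((0 : (LinearMap.ker A)ᗮ) : EuclideanSpace ℝ (Fin n))
    by simp]
  rw [Subtype.coe_inj, Submodule.orthogonalProjectionOnto_eq_zero_iff,
    Submodule.orthogonal_orthogonal]

lemma proj_apply_eq_inner {m n : ℕ}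
    (A : EuclideanSpace ℝ (Fin n) →ₗ[ℝ] EuclideanSpace ℝ (Fin m))
    (x : EuclideanSpace ℝ (Fin n)) (i : Fin n) :
    proj A x i = ⟪proj A (stdBasis n i), proj A x⟫ := by
  have h1 : proj A x i = ⟪stdBasis n i, proj A x⟫ := by
    rw [stdBasis]
    simp [EuclideanSpace.inner_single_left]
  rw [h1]
  have h2 : stdBasis n i - proj A (stdBasis n i) ∈ (LinearMap.ker A)ᗮᗮ :=
    Submodule.sub_starProjection_mem_orthogonal _
  have h3 : proj A x ∈ (LinearMap.ker A)ᗮ := (Submodule.orthogonalProjection _ x).2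
  have h4 : ⟪stdBasis n i - proj A (stdBasis n i), proj A x⟫ = 0 := by
    rw [real_inner_comm]; exact h2 _ h3
  rw [inner_sub_left] at h4
  linarith

theorem stmt12 {m n : ℕ}
    (A : EuclideanSpace ℝ (Fin n) →ₗ[ℝ] EuclideanSpace ℝ (Fin m))
    (hA : ∀ i, stdBasis n i ∉ LinearMap.ker A)
    (hNP : ∀ i j : Fin n, i ≠ j → ∀ η : ℝ, A (stdBasis n i) ≠ η • A (stdBasis n j))
    (j : Fin n) :
    (∀ i, i ≠ j →
      |(wgt A i)⁻¹ * proj A (stdBasis n j) i| < |(wgt A j)⁻¹ * proj A (stdBasis n j) j|) ∧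
    (wgt A j)⁻¹ * proj A (stdBasis n j) j = ‖proj A (stdBasis n j)‖ ∧
    ‖proj A (stdBasis n j)‖ ≤ 1 := by
  have hpne : ∀ i, proj A (stdBasis n i) ≠ 0 := fun i h => hA i ((proj_eq_zero_iff A _).mp h)
  have hw : ∀ i, 0 < wgt A i := fun i => norm_pos_iff.mpr (hpne i)
  have hj : (wgt A j)⁻¹ * proj A (stdBasis n j) j = ‖proj A (stdBasis n j)‖ := by
    rw [proj_apply_eq_inner, real_inner_self_eq_norm_sq, wgt, sq,
      inv_mul_cancel_left₀ (norm_ne_zero_iff.mpr (hpne j))]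
  refine ⟨fun i hij => ?_, hj, ?_⟩
  · rw [hj, abs_of_nonneg (norm_nonneg _), abs_mul, abs_of_nonneg (le_of_lt (inv_pos.mpr (hw i))),
      proj_apply_eq_inner]
    have hcs : |⟪proj A (stdBasis n i), proj A (stdBasis n j)⟫| < wgt A i * ‖proj A (stdBasis n j)‖ := by
      rcases lt_or_eq_of_le (abs_real_inner_le_norm (proj A (stdBasis n i)) (proj A (stdBasis n j)))
        with h | h
      · exact h
      · exfalso
        have hne : ‖proj A (stdBasis n i)‖ * ‖proj A (stdBasis n j)‖ ≠ 0 :=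
          mul_ne_zero (norm_ne_zero_iff.mpr (hpne i)) (norm_ne_zero_iff.mpr (hpne j))
        have h1 : |⟪proj A (stdBasis n i), proj A (stdBasis n j)⟫ /
            (‖proj A (stdBasis n i)‖ * ‖proj A (stdBasis n j)‖)| = 1 := by
          rw [abs_div, h, abs_of_nonneg (by positivity)]
          exact div_self hne
        obtain ⟨-, r, hr, hparallel⟩ :=
          (abs_real_inner_div_norm_mul_norm_eq_one_iff _ _).mp h1
        have hk : stdBasis n j - r • stdBasis n i ∈ LinearMap.ker A := by
          rw [← proj_eq_zero_iff]
          have : proj A (stdBasis n j - r • stdBasis n i) =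
              proj A (stdBasis n j) - r • proj A (stdBasis n i) := by
            simp [proj, map_sub, map_smul]
          rw [this, hparallel, sub_self]
        rw [LinearMap.mem_ker, map_sub, map_smul, sub_eq_zero] at hk
        exact hNP j i hij.symm r hk
    calc (wgt A i)⁻¹ * |⟪proj A (stdBasis n i), proj A (stdBasis n j)⟫|
        < (wgt A i)⁻¹ * (wgt A i * ‖proj A (stdBasis n j)‖) := by
          exact mul_lt_mul_of_pos_left hcs (inv_pos.mpr (hw i))
      _ = ‖proj A (stdBasis n j)‖ := inv_mul_cancel_left₀ (hw i).ne' _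
  · have h := (Submodule.orthogonalProjection (LinearMap.ker A)ᗮ).le_opNorm (stdBasis n j)
    have h2 : ‖stdBasis n j‖ = 1 := by
      rw [stdBasis]
      simp [EuclideanSpace.norm_single]
    calc ‖proj A (stdBasis n j)‖ ≤ ‖Submodule.orthogonalProjection (LinearMap.ker A)ᗮ‖ * ‖stdBasis n j‖ := h
      _ ≤ 1 := by rw [h2, mul_one]; exact Submodule.orthogonalProjection_norm_le _
end
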